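/- Let Z : ℝⁿ → (ℝⁿ)* be a symmetric linear map and let 𝓑 ⊂ Sym(ℝⁿ)* be the open set of symmetric bilinear forms B on (ℝⁿ)* (viewed as maps) with Id − ZB invertible, with B̃ := B(Id − ZB)⁻¹. Then the map B ↦ n⁺(B̃) − n⁺(B) is locally constant on 𝓑 (constant on each connected component). -/

import Mathlib

set_option linter.unusedSectionVars false
set_option maxHeartbeats 1000000

open scoped Matrix

/-- Coindex (number of positive eigenvalues) of a symmetric matrix, defined as the largest
dimension of a subspace on which the associated quadratic form is positive definite. -/
noncomputable def matCoindex {n : ℕ} (M : Matrix (Fin n) (Fin n) ℝ) : ℕ :=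
  sSup {m : ℕ | ∃ S : Submodule ℝ (Fin n → ℝ), Module.finrank ℝ S = m ∧
    ∀ x ∈ S, x ≠ 0 → 0 < x ⬝ᵥ M.mulVec x}

namespace CoindAux

open Matrix

variable {m : Type*} [Fintype m] [DecidableEq m] {l : Type*} [Fintype l] [DecidableEq l]

/-- `S` is a positive subspace for the quadratic form of `M`. -/
def PosOn (M : Matrix m m ℝ) (S : Submodule ℝ (m → ℝ)) : Prop :=
  ∀ x ∈ S, x ≠ 0 → 0 < x ⬝ᵥ M.mulVec x

/-- Coindex over an arbitrary (finite) index type. -/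
noncomputable def coind (M : Matrix m m ℝ) : ℕ :=
  sSup {k : ℕ | ∃ S : Submodule ℝ (m → ℝ), Module.finrank ℝ S = k ∧ PosOn M S}

lemma coind_setOf_nonempty (M : Matrix m m ℝ) :
    {k : ℕ | ∃ S : Submodule ℝ (m → ℝ), Module.finrank ℝ S = k ∧ PosOn M S}.Nonempty :=
  ⟨0, ⊥, finrank_bot ℝ _, fun _x hx hx0 => absurd (Submodule.mem_bot _ |>.mp hx) hx0⟩

lemma coind_setOf_bddAbove (M : Matrix m m ℝ) :
    BddAbove {k : ℕ | ∃ S : Submodule ℝ (m → ℝ), Module.finrank ℝ S = k ∧ PosOn M S} :=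
  ⟨Module.finrank ℝ (m → ℝ), fun _k ⟨S, hS, _⟩ => hS ▸ S.finrank_le⟩

lemma le_coind {M : Matrix m m ℝ} {S : Submodule ℝ (m → ℝ)} (h : PosOn M S) :
    Module.finrank ℝ S ≤ coind M :=
  le_csSup (coind_setOf_bddAbove M) ⟨S, rfl, h⟩

lemma coind_spec (M : Matrix m m ℝ) :
    ∃ S : Submodule ℝ (m → ℝ), Module.finrank ℝ S = coind M ∧ PosOn M S :=
  Nat.sSup_mem (coind_setOf_nonempty M) (coind_setOf_bddAbove M)

lemma coind_le {M : Matrix m m ℝ} {c : ℕ}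
    (h : ∀ S : Submodule ℝ (m → ℝ), PosOn M S → Module.finrank ℝ S ≤ c) : coind M ≤ c :=
  csSup_le (coind_setOf_nonempty M) (fun _k ⟨S, hS, hP⟩ => hS ▸ h S hP)

lemma qf_conj (A M : Matrix m m ℝ) (x : m → ℝ) :
    (A *ᵥ x) ⬝ᵥ M *ᵥ (A *ᵥ x) = x ⬝ᵥ (Aᵀ * M * A) *ᵥ x := by
  rw [← mulVec_mulVec, ← mulVec_mulVec, dotProduct_mulVec x, vecMul_transpose]

/-- The linear equivalence of `m → ℝ` given by an invertible matrix. -/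
noncomputable def mulVecEquiv (A : Matrix m m ℝ) (hA : IsUnit A.det) :
    (m → ℝ) ≃ₗ[ℝ] (m → ℝ) :=
  LinearEquiv.ofLinear A.mulVecLin A⁻¹.mulVecLin
    (by rw [← mulVecLin_mul, mul_nonsing_inv _ hA, mulVecLin_one])
    (by rw [← mulVecLin_mul, nonsing_inv_mul _ hA, mulVecLin_one])

@[simp] lemma mulVecEquiv_apply (A : Matrix m m ℝ) (hA : IsUnit A.det) (x : m → ℝ) :
    mulVecEquiv A hA x = A *ᵥ x := rfl

lemma coind_le_conj (M A : Matrix m m ℝ) (hA : IsUnit A.det) :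
    coind M ≤ coind (Aᵀ * M * A) := by
  obtain ⟨S, hS, hP⟩ := coind_spec M
  rw [← hS]
  have hP' : PosOn (Aᵀ * M * A) (S.map (mulVecEquiv A hA).symm.toLinearMap) := by
    intro x hx hx0
    rw [← qf_conj]
    obtain ⟨y, hy, rfl⟩ := hx
    have hAy : A *ᵥ ((mulVecEquiv A hA).symm.toLinearMap y) = y :=
      (mulVecEquiv A hA).apply_symm_apply y
    rw [hAy]
    refine hP y hy fun h => hx0 ?_
    simp [h]
  have := le_coind hP'
  rwa [LinearEquiv.finrank_map_eq] at this

lemma coind_conj (M A : Matrix m m ℝ) (hA : IsUnit A.det) :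
    coind (Aᵀ * M * A) = coind M := by
  refine le_antisymm ?_ (coind_le_conj M A hA)
  have hA' : IsUnit (A⁻¹).det := isUnit_nonsing_inv_det A hA
  have h2 := coind_le_conj (Aᵀ * M * A) A⁻¹ hA'
  have hEq : (A⁻¹)ᵀ * (Aᵀ * M * A) * A⁻¹ = M := by
    rw [transpose_nonsing_inv]
    have e1 : Aᵀ⁻¹ * (Aᵀ * M * A) * A⁻¹ = Aᵀ⁻¹ * Aᵀ * (M * (A * A⁻¹)) := by
      simp only [Matrix.mul_assoc]
    rw [e1, nonsing_inv_mul _ (by rwa [det_transpose]), mul_nonsing_inv _ hA, one_mul, mul_one]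
  rwa [hEq] at h2

/-- Coordinate subspace of functions supported on `{i | p i}`. -/
def coordSubspace (p : m → Prop) [DecidablePred p] : Submodule ℝ (m → ℝ) where
  carrier := {x | ∀ i, ¬ p i → x i = 0}
  add_mem' := fun {x y} hx hy i hi => by simp [hx i hi, hy i hi]
  zero_mem' := fun i _ => rfl
  smul_mem' := fun c x hx i hi => by simp [hx i hi]

noncomputable def coordEquiv (p : m → Prop) [DecidablePred p] :
    coordSubspace p ≃ₗ[ℝ] ({i // p i} → ℝ) where
  toFun x i := x.1 i.1
  map_add' x y := rfl
  map_smul' c x := rfl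
  invFun y := ⟨fun i => if h : p i then y ⟨i, h⟩ else 0, fun i hi => dif_neg hi⟩
  left_inv x := Subtype.ext (funext fun i => by
    by_cases h : p i
    · simp [h]
    · simp [h, x.2 i h])
  right_inv y := funext fun i => by show dite _ _ _ = _; rw [dif_pos i.2]

lemma finrank_coordSubspace (p : m → Prop) [DecidablePred p] :
    Module.finrank ℝ (coordSubspace p) = Fintype.card {i // p i} := by
  rw [(coordEquiv p).finrank_eq, Module.finrank_fintype_fun_eq_card]

lemma qf_diagonal (d : m → ℝ) (x : m → ℝ) :
    x ⬝ᵥ (diagonal d) *ᵥ x = ∑ i, d i * (x i * x i) := by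
  unfold dotProduct
  congr 1
  ext i
  rw [mulVec_diagonal]
  ring

lemma posOn_coord_diagonal (d : m → ℝ) :
    PosOn (diagonal d) (coordSubspace (fun i => 0 < d i)) := by
  intro x hx hx0
  rw [show (diagonal d).mulVec x = (diagonal d) *ᵥ x from rfl, qf_diagonal]
  obtain ⟨j, hj⟩ : ∃ j, x j ≠ 0 := by
    by_contra h
    push_neg at h
    exact hx0 (funext h)
  have hdj : 0 < d j := by
    by_contra h
    exact hj (hx j h)
  refine Finset.sum_pos' (fun i _ => ?_) ⟨j, Finset.mem_univ j, ?_⟩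
  · by_cases h : 0 < d i
    · exact mul_nonneg h.le (mul_self_nonneg _)
    · simp [hx i h]
  · exact mul_pos hdj (mul_self_pos.mpr hj)

lemma finrank_le_card_pos_of_posOn {d : m → ℝ} {S : Submodule ℝ (m → ℝ)}
    (hP : PosOn (diagonal d) S) :
    Module.finrank ℝ S ≤ Fintype.card {i // 0 < d i} := by
  have hcard : Fintype.card {i // 0 < d i} = Module.finrank ℝ ({i // 0 < d i} → ℝ) :=
    (Module.finrank_fintype_fun_eq_card ℝ).symm
  rw [hcard]
  refine LinearMap.finrank_le_finrank_of_injective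
    (f := (LinearMap.pi (fun i : {i // 0 < d i} => (LinearMap.proj i.1).comp S.subtype))) ?_
  rw [← LinearMap.ker_eq_bot, LinearMap.ker_eq_bot']
  intro x hx
  have hx' : ∀ i : m, 0 < d i → x.1 i = 0 := by
    intro i hi
    exact congrFun hx ⟨i, hi⟩
  by_contra h0
  have hx0 : (x : m → ℝ) ≠ 0 := fun h => h0 (Subtype.ext h)
  have hpos := hP x.1 x.2 hx0
  rw [show (diagonal d).mulVec (x:m → ℝ) = (diagonal d) *ᵥ (x:m → ℝ) from rfl, qf_diagonal] at hpos
  have : ∑ i, d i * ((x:m → ℝ) i * (x:m → ℝ) i) ≤ 0 := by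
    refine Finset.sum_nonpos fun i _ => ?_
    by_cases h : 0 < d i
    · simp [hx' i h]
    · exact mul_nonpos_of_nonpos_of_nonneg (not_lt.mp h) (mul_self_nonneg _)
  exact absurd hpos (not_lt.mpr this)

lemma coind_diagonal (d : m → ℝ) : coind (diagonal d) = Fintype.card {i // 0 < d i} := by
  refine le_antisymm (coind_le fun S hS => finrank_le_card_pos_of_posOn hS) ?_
  rw [← finrank_coordSubspace (fun i => 0 < d i)]
  exact le_coind (posOn_coord_diagonal d)

/-- Any real symmetric matrix is congruent to a diagonal matrix. -/
lemma exists_conj_diagonal {M : Matrix m m ℝ} (hM : M.IsSymm) :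
    ∃ (A : Matrix m m ℝ) (d : m → ℝ), IsUnit A.det ∧ M = Aᵀ * diagonal d * A := by
  have hH : M.IsHermitian := by
    rwa [Matrix.IsHermitian, conjTranspose_eq_transpose_of_trivial]
  have hUmem := (hH.eigenvectorUnitary).2
  have hUU : (hH.eigenvectorUnitary : Matrix m m ℝ) * star (hH.eigenvectorUnitary : Matrix m m ℝ)
      = 1 := (Unitary.mem_iff.mp hUmem).2
  have hUunit : IsUnit (hH.eigenvectorUnitary : Matrix m m ℝ) :=
    ⟨⟨_, star (hH.eigenvectorUnitary : Matrix m m ℝ), hUU, (Unitary.mem_iff.mp hUmem).1⟩, rfl⟩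
  have hd : Matrix.diagonal ((RCLike.ofReal : ℝ → ℝ) ∘ hH.eigenvalues)
      = diagonal hH.eigenvalues := by congr 1
  have hsU : star (hH.eigenvectorUnitary : Matrix m m ℝ)
      = (hH.eigenvectorUnitary : Matrix m m ℝ)ᵀ := by
    rw [Matrix.star_eq_conjTranspose, conjTranspose_eq_transpose_of_trivial]
  refine ⟨(hH.eigenvectorUnitary : Matrix m m ℝ)ᵀ, hH.eigenvalues, ?_, ?_⟩
  · rw [det_transpose]
    exact hUunit.map detMonoidHom
  · calc M = (hH.eigenvectorUnitary : Matrix m m ℝ)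
          * Matrix.diagonal ((RCLike.ofReal : ℝ → ℝ) ∘ hH.eigenvalues)
          * star (hH.eigenvectorUnitary : Matrix m m ℝ) := hH.spectral_theorem
    _ = ((hH.eigenvectorUnitary : Matrix m m ℝ)ᵀ)ᵀ * diagonal hH.eigenvalues
          * (hH.eigenvectorUnitary : Matrix m m ℝ)ᵀ := by
        rw [hd, hsU, transpose_transpose]

lemma coind_eq_card_of_conj {M A : Matrix m m ℝ} {d : m → ℝ} (hA : IsUnit A.det)
    (hM : M = Aᵀ * diagonal d * A) : coind M = Fintype.card {i // 0 < d i} := by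
  rw [hM, coind_conj _ _ hA, coind_diagonal]

lemma neg_conj {M A : Matrix m m ℝ} {d : m → ℝ} (hM : M = Aᵀ * diagonal d * A) :
    -M = Aᵀ * diagonal (-d) * A := by
  rw [hM, show (-d) = fun i => -d i from rfl, ← diagonal_neg, Matrix.mul_neg, Matrix.neg_mul]

lemma rank_eq_card_of_conj {M A : Matrix m m ℝ} {d : m → ℝ} (hA : IsUnit A.det)
    (hM : M = Aᵀ * diagonal d * A) : M.rank = Fintype.card {i // d i ≠ 0} := by
  rw [hM, rank_mul_eq_left_of_isUnit_det _ _ hA,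
    rank_mul_eq_right_of_isUnit_det _ _ (by rwa [det_transpose]), rank_diagonal]

/-- For a real symmetric matrix, `n⁺ + n⁻ = rank`. -/
lemma coind_add_coind_neg {M : Matrix m m ℝ} (hM : M.IsSymm) :
    coind M + coind (-M) = M.rank := by
  obtain ⟨A, d, hA, hMeq⟩ := exists_conj_diagonal hM
  rw [coind_eq_card_of_conj hA hMeq, coind_eq_card_of_conj hA (neg_conj hMeq),
    rank_eq_card_of_conj hA hMeq]
  have h1 : Fintype.card {i // 0 < (-d) i} = Fintype.card {i // d i < 0} :=
    Fintype.card_congr (Equiv.subtypeEquivRight fun i => by simp [Pi.neg_apply, neg_pos])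
  rw [h1]
  classical
  simp only [Fintype.card_subtype]
  rw [← Finset.card_union_of_disjoint, ← Finset.filter_or]
  · have : (Finset.univ.filter fun i => 0 < d i ∨ d i < 0)
        = Finset.univ.filter fun i => d i ≠ 0 := by
      apply Finset.filter_congr
      intro i _
      constructor
      · rintro (h | h)
        exacts [h.ne', h.ne]
      · intro h
        rcases h.lt_or_gt with h | h
        exacts [Or.inr h, Or.inl h]
    rw [this]
  · rw [Finset.disjoint_left]
    intro i h1 h2
    simp only [Finset.mem_filter] at h1 h2
    exact absurd (h1.2.trans h2.2) (lt_irrefl _)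

/-- Additivity of the coindex on block-diagonal symmetric matrices. -/
lemma coind_fromBlocks {M : Matrix m m ℝ} {N : Matrix l l ℝ} (hM : M.IsSymm) (hN : N.IsSymm) :
    coind (fromBlocks M 0 0 N) = coind M + coind N := by
  obtain ⟨A, d, hA, hMeq⟩ := exists_conj_diagonal hM
  obtain ⟨C, e, hC, hNeq⟩ := exists_conj_diagonal hN
  have key : fromBlocks M 0 0 N =
      (fromBlocks A 0 0 C)ᵀ * fromBlocks (diagonal d) 0 0 (diagonal e) * (fromBlocks A 0 0 C) := by
    rw [fromBlocks_transpose, transpose_zero, transpose_zero, fromBlocks_multiply,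
      fromBlocks_multiply, hMeq, hNeq]
    congr 1 <;> simp [Matrix.mul_assoc]
  have hdet : IsUnit (fromBlocks A (0 : Matrix m l ℝ) 0 C).det := by
    rw [det_fromBlocks_zero₂₁]
    exact hA.mul hC
  rw [key, coind_conj _ _ hdet, fromBlocks_diagonal, coind_diagonal,
    coind_eq_card_of_conj hA hMeq, coind_eq_card_of_conj hC hNeq]
  rw [Fintype.card_congr (Equiv.subtypeSum
    (p := fun i : m ⊕ l => 0 < Sum.elim d e i)), Fintype.card_sum]
  have e1 : Fintype.card {a // 0 < (Sum.elim d e) (Sum.inl a)} = Fintype.card {i // 0 < d i} :=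
    Fintype.card_congr (Equiv.subtypeEquivRight fun a => by simp)
  have e2 : Fintype.card {b // 0 < (Sum.elim d e) (Sum.inr b)} = Fintype.card {i // 0 < e i} :=
    Fintype.card_congr (Equiv.subtypeEquivRight fun b => by simp)
  rw [e1, e2]

/-- Lower semicontinuity of the coindex. -/
lemma eventually_coind_ge (M : Matrix m m ℝ) : ∀ᶠ M' in nhds M, coind M ≤ coind M' := by
  obtain ⟨S, hS, hP⟩ := coind_spec M
  have hg : Continuous (fun p : Matrix m m ℝ × (m → ℝ) => p.2 ⬝ᵥ p.1 *ᵥ p.2) := by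
    apply Continuous.dotProduct
    · exact continuous_snd
    · exact continuous_fst.matrix_mulVec continuous_snd
  set K : Set (m → ℝ) := (S : Set (m → ℝ)) ∩ Metric.sphere 0 1 with hKdef
  have hKc : IsCompact K := (isCompact_sphere 0 1).inter_left S.closed_of_finiteDimensional
  have hP' : ∀ x ∈ K, ∀ᶠ z : Matrix m m ℝ × (m → ℝ) in nhds (M, x), 0 < z.2 ⬝ᵥ z.1 *ᵥ z.2 := by
    intro x hx
    have hx0 : x ≠ 0 := by
      intro h
      have := hx.2
      rw [h] at this
      simp [Metric.mem_sphere] at this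
    exact (hg.continuousAt (x := (M, x))).eventually (eventually_gt_nhds (hP x hx.1 hx0))
  have hEv := hKc.eventually_forall_of_forall_eventually
    (P := fun (M' : Matrix m m ℝ) (x : m → ℝ) => 0 < x ⬝ᵥ M' *ᵥ x) hP'
  filter_upwards [hEv] with M' h
  rw [← hS]
  refine le_coind ?_
  intro x hxS hx0
  have hn0 : ‖x‖ ≠ 0 := norm_ne_zero_iff.mpr hx0
  set u : m → ℝ := ‖x‖⁻¹ • x with hu
  have huK : u ∈ K := by
    refine ⟨S.smul_mem _ hxS, ?_⟩
    rw [mem_sphere_zero_iff_norm, hu, norm_smul]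
    simp [abs_of_nonneg (inv_nonneg.mpr (norm_nonneg x)), inv_mul_cancel₀ hn0]
  have hpos := h u huK
  have hxu : x = ‖x‖ • u := (smul_inv_smul₀ hn0 x).symm
  show 0 < x ⬝ᵥ M' *ᵥ x
  rw [hxu, smul_dotProduct, mulVec_smul, dotProduct_smul, smul_eq_mul, smul_eq_mul]
  have hnp : 0 < ‖x‖ := lt_of_le_of_ne (norm_nonneg x) (Ne.symm hn0)
  exact mul_pos hnp (mul_pos hnp hpos)

/-- For a continuous family of symmetric matrices of constant rank, the coindex is locally
constant. -/
lemma eventually_coind_eq {X : Type*} [TopologicalSpace X] {W : X → Matrix m m ℝ} {x₀ : X}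
    (hW : ContinuousAt W x₀) (hsymm : ∀ x, (W x).IsSymm) {r : ℕ}
    (hrank : ∀ x, (W x).rank = r) :
    ∀ᶠ x in nhds x₀, coind (W x) = coind (W x₀) := by
  have h1 : ∀ᶠ x in nhds x₀, coind (W x₀) ≤ coind (W x) :=
    hW.eventually (eventually_coind_ge (W x₀))
  have hWn : ContinuousAt (fun x => -(W x)) x₀ := hW.neg
  have h2 : ∀ᶠ x in nhds x₀, coind (-(W x₀)) ≤ coind (-(W x)) :=
    hWn.eventually (eventually_coind_ge (-(W x₀)))
  filter_upwards [h1, h2] with x hx1 hx2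
  have e1 := coind_add_coind_neg (hsymm x)
  have e0 := coind_add_coind_neg (hsymm x₀)
  rw [hrank x] at e1
  rw [hrank x₀] at e0
  omega

end CoindAux

namespace CoindAux

open Matrix

variable {m : Type*} [Fintype m] [DecidableEq m]

/-- The main algebraic step: symmetry and rank of `W = Z + Z B̃ Z`, and the
congruence identity `n⁺(W) + n⁺(B) = n⁺(Z) + n⁺(B̃)`. -/
lemma main_step (Z B : Matrix m m ℝ) (hZ : Z.IsSymm) (hB : B.IsSymm)
    (hU : IsUnit (1 - Z * B)) :
    (Z + Z * (B * (1 - Z * B)⁻¹) * Z).IsSymm ∧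
    (Z + Z * (B * (1 - Z * B)⁻¹) * Z).rank = Z.rank ∧
    coind (Z + Z * (B * (1 - Z * B)⁻¹) * Z) + coind B
      = coind Z + coind (B * (1 - Z * B)⁻¹) := by
  have hdet : IsUnit (1 - Z * B).det := (Matrix.isUnit_iff_isUnit_det _).mp hU
  have hTr : (1 - Z * B)ᵀ = 1 - B * Z := by
    rw [transpose_sub, transpose_one, transpose_mul, hZ.eq, hB.eq]
  have hdet' : IsUnit (1 - B * Z).det := by
    rw [← hTr, det_transpose]; exact hdet
  set Bt : Matrix m m ℝ := B * (1 - Z * B)⁻¹ with hBt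
  clear_value Bt
  have e1 : Bt * (1 - Z * B) = B := by
    rw [hBt]; exact nonsing_inv_mul_cancel_right _ _ hdet
  have key1 : Bt = B + Bt * Z * B := by
    have h : Bt - Bt * Z * B = B := by
      calc Bt - Bt * Z * B = Bt * (1 - Z * B) := by noncomm_ring
        _ = B := e1
    exact sub_eq_iff_eq_add.mp h
  have e2 : (1 - B * Z) * Bt = B := by
    rw [hBt, ← Matrix.mul_assoc]
    have h3 : (1 - B * Z) * B = B * (1 - Z * B) := by noncomm_ring
    rw [h3, mul_nonsing_inv_cancel_right _ _ hdet]
  have key2 : Bt = B + B * Z * Bt := by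
    have h : Bt - B * Z * Bt = B := by
      calc Bt - B * Z * Bt = (1 - B * Z) * Bt := by noncomm_ring
        _ = B := e2
    exact sub_eq_iff_eq_add.mp h
  have comm : (1 - B * Z)⁻¹ * B = Bt := by
    calc (1 - B * Z)⁻¹ * B = (1 - B * Z)⁻¹ * ((1 - B * Z) * Bt) := by rw [e2]
      _ = Bt := nonsing_inv_mul_cancel_left _ _ hdet'
  have hBtSymm : Bt.IsSymm := by
    show Btᵀ = Bt
    rw [hBt, transpose_mul, transpose_nonsing_inv, hTr, hB.eq, comm, hBt]
  have hWsymm : (Z + Z * Bt * Z).IsSymm := by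
    show (Z + Z * Bt * Z)ᵀ = Z + Z * Bt * Z
    have h : (Z * Bt * Z)ᵀ = Z * Bt * Z := by
      rw [transpose_mul, transpose_mul, hZ.eq, hBtSymm.eq, Matrix.mul_assoc]
    rw [transpose_add, hZ.eq, h]
  have hWB : (Z + Z * Bt * Z) * (1 - B * Z) = Z := by
    have expand : (Z + Z * Bt * Z) * (1 - B * Z)
        = Z + Z * (Bt - (B + Bt * Z * B)) * Z := by noncomm_ring
    rw [expand, ← key1]
    simp
  have hWinv : Z + Z * Bt * Z = Z * (1 - B * Z)⁻¹ := by
    calc Z + Z * Bt * Z = (Z + Z * Bt * Z) * (1 - B * Z) * (1 - B * Z)⁻¹ :=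
          (mul_nonsing_inv_cancel_right _ _ hdet').symm
      _ = Z * (1 - B * Z)⁻¹ := by rw [hWB]
  have hWrank : (Z + Z * Bt * Z).rank = Z.rank := by
    rw [hWinv]
    exact rank_mul_eq_left_of_isUnit_det _ _ (isUnit_nonsing_inv_det _ hdet')
  refine ⟨hWsymm, hWrank, ?_⟩
  -- the congruence identity
  have hL1 : IsUnit (fromBlocks (1 : Matrix m m ℝ) B 0 1).det := by
    rw [det_fromBlocks_zero₂₁]; simp
  have hL2 : IsUnit (fromBlocks (1 : Matrix m m ℝ) 0 Z 1).det := by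
    rw [det_fromBlocks_zero₁₂]; simp
  have hblock : (fromBlocks (1 : Matrix m m ℝ) B 0 1)ᵀ
        * fromBlocks (Z + Z * Bt * Z) 0 0 B * fromBlocks 1 B 0 1
      = (fromBlocks (1 : Matrix m m ℝ) 0 Z 1)ᵀ
        * fromBlocks Z 0 0 Bt * fromBlocks 1 0 Z 1 := by
    rw [fromBlocks_transpose, fromBlocks_transpose]
    simp only [transpose_one, transpose_zero, hB.eq, hZ.eq, fromBlocks_multiply,
      Matrix.one_mul, Matrix.mul_one, Matrix.zero_mul, Matrix.mul_zero,
      add_zero, zero_add, Matrix.mul_assoc]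
    rw [fromBlocks_inj]
    refine ⟨?_, ?_, ?_, ?_⟩
    · rfl
    · -- (Z + Z*Bt*Z) * B = Z * Bt, up to assoc normal form from simp
      have expand : (Z + Z * Bt * Z) * B = Z * Bt - Z * (Bt - (B + Bt * Z * B)) := by
        noncomm_ring
      have h := expand
      rw [← key1] at h
      simp only [sub_self, Matrix.mul_zero, sub_zero] at h
      simpa [Matrix.mul_assoc, Matrix.mul_add, Matrix.add_mul] using h
    · have expand : B * (Z + Z * Bt * Z) = Bt * Z - (Bt - (B + B * Z * Bt)) * Z := by
        noncomm_ring
      have h := expand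
      rw [← key2] at h
      simp only [sub_self, Matrix.zero_mul, sub_zero] at h
      simpa [Matrix.mul_assoc, Matrix.mul_add, Matrix.add_mul] using h
    · have expand : B * (Z + Z * Bt * Z) * B + B
          = Bt - (Bt - (B + B * Z * Bt)) - B * Z * (Bt - (B + Bt * Z * B)) := by
        noncomm_ring
      have h := expand
      rw [← key1, ← key2] at h
      simp only [sub_self, Matrix.mul_zero, sub_zero] at h
      simpa [Matrix.mul_assoc, Matrix.mul_add, Matrix.add_mul] using h
  have hco : coind (fromBlocks (Z + Z * Bt * Z) 0 0 B) = coind (fromBlocks Z 0 0 Bt) := by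
    rw [← coind_conj (fromBlocks (Z + Z * Bt * Z) 0 0 B) _ hL1, hblock,
      coind_conj _ _ hL2]
  rw [coind_fromBlocks hWsymm hB, coind_fromBlocks hZ hBtSymm] at hco
  exact hco

end CoindAux

lemma matCoindex_eq_coind {n : ℕ} (M : Matrix (Fin n) (Fin n) ℝ) :
    matCoindex M = CoindAux.coind M := rfl

open Matrix CoindAux in
/-- **Local constancy of the coindex difference under the chart transition.**
For a fixed symmetric `Z`, on the open set of symmetric `B` with `Id − ZB` invertible, the
map `B ↦ n⁺(B̃) − n⁺(B)`, with `B̃ = B (Id − ZB)⁻¹`, is locally constant (hence constant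
on each connected component). -/
theorem coindex_difference_locallyConstant
    {n : ℕ} (Z : Matrix (Fin n) (Fin n) ℝ) (hZ : Z.IsSymm) :
    IsLocallyConstant
      (fun B : {B : Matrix (Fin n) (Fin n) ℝ // B.IsSymm ∧ IsUnit (1 - Z * B)} =>
        (matCoindex (B.1 * (1 - Z * B.1)⁻¹) : ℤ) - (matCoindex B.1 : ℤ)) := by
  classical
  rw [IsLocallyConstant.iff_eventually_eq]
  intro B₀
  have hms := fun B : {B : Matrix (Fin n) (Fin n) ℝ // B.IsSymm ∧ IsUnit (1 - Z * B)} =>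
    CoindAux.main_step Z B.1 hZ B.2.1 B.2.2
  -- continuity of the auxiliary family at B₀
  have hc1 : Continuous fun B : {B : Matrix (Fin n) (Fin n) ℝ // B.IsSymm ∧ IsUnit (1 - Z * B)} =>
      1 - Z * B.1 :=
    continuous_const.sub (continuous_const.matrix_mul continuous_subtype_val)
  have hdet0 : (1 - Z * B₀.1).det ≠ 0 :=
    (((Matrix.isUnit_iff_isUnit_det _).mp B₀.2.2)).ne_zero
  have hRinv : ContinuousAt (Ring.inverse : ℝ → ℝ) ((1 - Z * B₀.1).det) := by
    rw [Ring.inverse_eq_inv']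
    exact continuousAt_inv₀ hdet0
  have hc2 : ContinuousAt (fun B : {B : Matrix (Fin n) (Fin n) ℝ // B.IsSymm ∧
      IsUnit (1 - Z * B)} => (1 - Z * B.1)⁻¹) B₀ := by
    have h := ContinuousAt.comp (x := B₀)
      (f := fun B : {B : Matrix (Fin n) (Fin n) ℝ // B.IsSymm ∧ IsUnit (1 - Z * B)} =>
        1 - Z * B.1)
      (g := Inv.inv) (continuousAt_matrix_inv (1 - Z * B₀.1) hRinv) hc1.continuousAt
    exact h
  have hmulC : Continuous (fun p : Matrix (Fin n) (Fin n) ℝ × Matrix (Fin n) (Fin n) ℝ =>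
      p.1 * p.2) := continuous_fst.matrix_mul continuous_snd
  have hc3 : ContinuousAt (fun B : {B : Matrix (Fin n) (Fin n) ℝ // B.IsSymm ∧
      IsUnit (1 - Z * B)} => B.1 * (1 - Z * B.1)⁻¹) B₀ :=
    (hmulC.continuousAt).comp (continuous_subtype_val.continuousAt.prodMk hc2)
  have hout : Continuous (fun P : Matrix (Fin n) (Fin n) ℝ => Z + Z * P * Z) :=
    continuous_const.add ((continuous_const.matrix_mul continuous_id).matrix_mul continuous_const)
  have hW : ContinuousAt (fun B : {B : Matrix (Fin n) (Fin n) ℝ // B.IsSymm ∧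
      IsUnit (1 - Z * B)} => Z + Z * (B.1 * (1 - Z * B.1)⁻¹) * Z) B₀ :=
    hout.continuousAt.comp hc3
  have hEv := CoindAux.eventually_coind_eq hW (fun B => (hms B).1) (fun B => (hms B).2.1)
  filter_upwards [hEv] with B hB
  have h1 := (hms B).2.2
  have h0 := (hms B₀).2.2
  simp only [matCoindex_eq_coind]
  omega
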